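/- Let X be a nonnegative integrable random variable with Pr(X = 0) ≥ 1/2, let A be an event on which X ≥ E(X) + c for some c > 0 with Pr(A) = q > 0, and let Y = X + c·1_A. If additionally X ≥ E(Y) on A, then SV(Y) − SV(X) ≥ (1/2)·(E(Y)^2 − E(X)^2) ≥ E(X)·c·q. -/

import Mathlib

open MeasureTheory

/-- For nonnegative X with Pr(X = 0) ≥ 1/2, an event A of probability q > 0 on which
    X ≥ E(X) + c, and Y = X + c·1_A with X ≥ E(Y) on A:
    SV(Y) - SV(X) ≥ (1/2)(E(Y)² - E(X)²) ≥ E(X)·c·q. -/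
theorem semivariance_increase {Ω : Type*} [MeasurableSpace Ω] (μ : Measure Ω)
    [IsProbabilityMeasure μ] (X : Ω → ℝ) (hX : Integrable X μ)
    (hpos : ∀ ω, 0 ≤ X ω)
    (hzero : (1/2 : ENNReal) ≤ μ {ω | X ω = 0})
    (A : Set Ω) (hA : MeasurableSet A) (q : ℝ) (hq : 0 < q)
    (hμA : μ A = ENNReal.ofReal q)
    (c : ℝ) (hc : 0 < c)
    (hAbig : ∀ ω ∈ A, (∫ ω', X ω' ∂μ) + c ≤ X ω)
    (Y : Ω → ℝ) (hYdef : Y = fun ω => X ω + A.indicator (fun _ => c) ω)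
    (hAEY : ∀ ω ∈ A, (∫ ω', Y ω' ∂μ) ≤ X ω) :
    (1/2) * ((∫ ω, Y ω ∂μ)^2 - (∫ ω, X ω ∂μ)^2)
        ≤ (∫ ω, (min (Y ω - ∫ ω', Y ω' ∂μ) 0)^2 ∂μ)
            - (∫ ω, (min (X ω - ∫ ω', X ω' ∂μ) 0)^2 ∂μ)
      ∧ (∫ ω, X ω ∂μ) * c * q
          ≤ (1/2) * ((∫ ω, Y ω ∂μ)^2 - (∫ ω, X ω ∂μ)^2) := by
  classical
  set EX := ∫ ω, X ω ∂μ with hEXdef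
  have hEXnn : 0 ≤ EX := integral_nonneg hpos
  have hInd : Integrable (A.indicator (fun _ => c)) μ := (integrable_const c).indicator hA
  have hYint : Integrable Y μ := by rw [hYdef]; exact hX.add hInd
  have hEYeq : (∫ ω, Y ω ∂μ) = EX + c * q := by
    rw [hYdef, integral_add hX hInd, integral_indicator_const c hA, measureReal_def, hμA,
      ENNReal.toReal_ofReal hq.le, smul_eq_mul, mul_comm]
  set EY := ∫ ω, Y ω ∂μ with hEYdef
  have hEXle : EX ≤ EY := by rw [hEYeq]; nlinarith
  have hEYnn : 0 ≤ EY := le_trans hEXnn hEXle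
  have hYpos : ∀ ω, 0 ≤ Y ω := by
    intro ω; rw [hYdef]
    exact add_nonneg (hpos ω) (Set.indicator_nonneg (fun _ _ => hc.le) ω)
  -- integrability of semivariance integrands
  have key_int : ∀ (Z : Ω → ℝ), Integrable Z μ → (∀ ω, 0 ≤ Z ω) → ∀ (m : ℝ), 0 ≤ m →
      Integrable (fun ω => (min (Z ω - m) 0)^2) μ := by
    intro Z hZ hZpos m hm
    have h1 : AEMeasurable (fun ω => min (Z ω - m) 0) μ :=
      (hZ.1.aemeasurable.sub aemeasurable_const).min aemeasurable_const
    refine (integrable_const (m^2)).mono' (h1.pow_const 2).aestronglyMeasurable ?_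
    filter_upwards with ω
    have h2 : -m ≤ min (Z ω - m) 0 := le_min (by linarith [hZpos ω]) (by linarith)
    have h3 : min (Z ω - m) 0 ≤ 0 := min_le_right _ _
    rw [Real.norm_eq_abs, abs_of_nonneg (sq_nonneg _)]
    nlinarith
  have hgXint := key_int X hX hpos EX hEXnn
  have hgYint := key_int Y hYint hYpos EY hEYnn
  -- pointwise: gX ≤ gY
  have hmono : ∀ x : ℝ, ∀ {m m' : ℝ}, m ≤ m' → (min (x - m) 0)^2 ≤ (min (x - m') 0)^2 := by
    intro x m m' h
    have h1 : min (x - m') 0 ≤ min (x - m) 0 := min_le_min (by linarith) le_rfl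
    have h2 : min (x - m) 0 ≤ 0 := min_le_right _ _
    nlinarith
  have hpt : ∀ ω, (min (X ω - EX) 0)^2 ≤ (min (Y ω - EY) 0)^2 := by
    intro ω
    by_cases hωA : ω ∈ A
    · have h1 : min (X ω - EX) 0 = 0 := by
        have := hAbig ω hωA
        exact min_eq_right (by linarith)
      rw [h1]
      simpa using sq_nonneg (min (Y ω - EY) 0)
    · have hYω : Y ω = X ω := by rw [hYdef]; simp [Set.indicator_of_notMem hωA]
      rw [hYω]; exact hmono _ hEXle
  -- measurable version of {X = 0}
  set X' := hX.1.mk X with hX'def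
  have hX'm : StronglyMeasurable X' := hX.1.stronglyMeasurable_mk
  have hXeq : X =ᵐ[μ] X' := hX.1.ae_eq_mk
  set S : Set Ω := {ω | X' ω = 0} with hSdef
  have hSm : MeasurableSet S := hX'm.measurable (measurableSet_singleton 0)
  have hμS : (1/2 : ENNReal) ≤ μ S := by
    refine le_trans hzero (measure_mono_ae ?_)
    filter_upwards [hXeq] with ω h hω
    exact h.symm.trans hω
  have hμSr : (1/2 : ℝ) ≤ (μ S).toReal := by
    have := ENNReal.toReal_mono (measure_ne_top μ S) hμS
    simpa using this
  have hdiffnn : 0 ≤ EY^2 - EX^2 := by nlinarith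
  -- integral comparison
  set f : Ω → ℝ := S.indicator (fun _ => EY^2 - EX^2) with hfdef
  have hf_int : Integrable f μ := (integrable_const _).indicator hSm
  have hae : f ≤ᵐ[μ] fun ω => (min (Y ω - EY) 0)^2 - (min (X ω - EX) 0)^2 := by
    filter_upwards [hXeq] with ω h
    by_cases hωS : ω ∈ S
    · have hX0 : X ω = 0 := h.trans hωS
      have hωA : ω ∉ A := by
        intro hωA; have := hAbig ω hωA; rw [hX0] at this; linarith
      have hY0 : Y ω = 0 := by
        rw [hYdef]; simp [Set.indicator_of_notMem hωA, hX0]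
      show f ω ≤ _
      rw [hfdef, Set.indicator_of_mem hωS, hX0, hY0, zero_sub, zero_sub,
        min_eq_left (by linarith), min_eq_left (by linarith), neg_sq, neg_sq]
    · show f ω ≤ _
      rw [hfdef, Set.indicator_of_notMem hωS]
      have := hpt ω; linarith
  have hint1 : ∫ ω, f ω ∂μ ≤
      ∫ ω, ((min (Y ω - EY) 0)^2 - (min (X ω - EX) 0)^2) ∂μ :=
    integral_mono_ae hf_int (hgYint.sub hgXint) hae
  rw [integral_sub hgYint hgXint] at hint1
  have hfval : ∫ ω, f ω ∂μ = (μ S).toReal * (EY^2 - EX^2) := by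
    rw [hfdef, integral_indicator_const _ hSm, smul_eq_mul, measureReal_def]
  rw [hfval] at hint1
  constructor
  · calc (1/2 : ℝ) * (EY^2 - EX^2) ≤ (μ S).toReal * (EY^2 - EX^2) :=
        mul_le_mul_of_nonneg_right hμSr hdiffnn
    _ ≤ _ := hint1
  · rw [hEYeq]; nlinarith
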